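/- arXiv:1809.00322 — 2 statements merged into one kernel-verified Lean document; each statement's English description precedes it below -/
import Mathlib

section
/- Let N₁, N₂ : ℝ → ℝ be monotone nondecreasing, right-continuous functions vanishing on (−∞, 0]. If ∫₀ᵏ (k−t)² dN₁(t) = ∫₀ᵏ (k−t)² dN₂(t) for all k > 0, then N₁ = N₂. -/
open MeasureTheory
open Set intervalIntegral


lemma aux_sq (t k : ℝ) : ∫ u in t..k, 2*(k-u) = (k-t)^2 := by
  have h2 : (∫ u in t..k, 2 * u) = 2 * ∫ u in t..k, u :=
    intervalIntegral.integral_const_mul 2 (fun x => x)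
  have : ∀ u : ℝ, 2*(k-u) = 2*k - 2*u := by intro u; ring
  simp only [this]
  rw [intervalIntegral.integral_sub (intervalIntegrable_const) ((intervalIntegral.intervalIntegrable_id).const_mul 2),
    h2, integral_id]
  simp
  ring

lemma step1 (N : StieltjesFunction ℝ) (hN0 : N 0 = 0) (k : ℝ) (hk : 0 < k) :
    ∫ t in Ioc 0 k, (k - t)^2 ∂N.measure
      = ∫ u in Ioc 0 k, (2*(k-u)) * N u := by
  set μ := N.measure with hμ
  have hfin : μ (Ioc 0 k) ≠ ⊤ := by
    rw [N.measure_Ioc]; exact ENNReal.ofReal_ne_top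
  haveI : IsFiniteMeasure (μ.restrict (Ioc 0 k)) :=
    ⟨by rw [Measure.restrict_apply_univ]; exact hfin.lt_top⟩
  haveI : IsFiniteMeasure (volume.restrict (Ioc (0:ℝ) k)) :=
    ⟨by rw [Measure.restrict_apply_univ]; simp⟩
  set f : ℝ → ℝ → ℝ := fun t u => indicator (Ici t) (fun u => 2*(k-u)) u with hf
  have hint : Integrable (Function.uncurry f)
      ((μ.restrict (Ioc 0 k)).prod (volume.restrict (Ioc 0 k))) := by
    have hmeas : Measurable (Function.uncurry f) := by
      have hset : MeasurableSet {p : ℝ × ℝ | p.1 ≤ p.2} :=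
        measurableSet_le measurable_fst measurable_snd
      have : Function.uncurry f = indicator {p : ℝ × ℝ | p.1 ≤ p.2} (fun p => 2*(k - p.2)) := by
        funext p
        simp only [Function.uncurry, hf, indicator, mem_Ici, mem_setOf_eq]
      rw [this]
      exact (measurable_const.mul (measurable_const.sub measurable_snd)).indicator hset
    apply Integrable.mono' (g := fun _ => 2*k) (integrable_const _)
      hmeas.aestronglyMeasurable
    rw [Measure.prod_restrict]
    filter_upwards [ae_restrict_mem (measurableSet_Ioc.prod measurableSet_Ioc)] with p hp
    obtain ⟨hp1, hp2⟩ := hp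
    simp only [Function.uncurry, hf, indicator, mem_Ici]
    split_ifs with h
    · rw [Real.norm_eq_abs, abs_of_nonneg (by nlinarith [hp2.2] : (0:ℝ) ≤ 2*(k - p.2))]
      nlinarith [hp2.1]
    · simp; positivity
  have swap := MeasureTheory.integral_integral_swap hint
  calc ∫ t in Ioc 0 k, (k - t)^2 ∂μ
      = ∫ t in Ioc 0 k, (∫ u in Ioc 0 k, f t u) ∂μ := by
        apply setIntegral_congr_fun measurableSet_Ioc
        intro t ht
        have h1 : Ici t ∩ Ioc (0:ℝ) k = Icc t k := by
          ext u; constructor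
          · rintro ⟨hu3, ⟨_, hu2⟩⟩; exact ⟨hu3, hu2⟩
          · rintro ⟨hu1, hu2⟩; exact ⟨hu1, ⟨lt_of_lt_of_le ht.1 hu1, hu2⟩⟩
        show (k - t)^2 = ∫ u in Ioc 0 k, f t u
        rw [← aux_sq t k, hf]
        simp only
        rw [MeasureTheory.integral_indicator measurableSet_Ici,
          Measure.restrict_restrict measurableSet_Ici, h1,
          integral_Icc_eq_integral_Ioc, ← intervalIntegral.integral_of_le ht.2]
    _ = ∫ u in Ioc 0 k, (∫ t in Ioc 0 k, f t u ∂μ) := swap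
    _ = ∫ u in Ioc 0 k, (2*(k-u)) * N u := by
        apply setIntegral_congr_fun measurableSet_Ioc
        intro u hu
        have h1 : ∀ t, f t u = indicator (Iic u) (fun _ => 2*(k-u)) t := by
          intro t
          simp only [hf, indicator, mem_Ici, mem_Iic]
        simp only [h1]
        rw [MeasureTheory.integral_indicator measurableSet_Iic,
          Measure.restrict_restrict measurableSet_Iic]
        have h2 : Iic u ∩ Ioc (0:ℝ) k = Ioc 0 u := by
          ext t; constructor
          · rintro ⟨ht3, ⟨ht1, _⟩⟩; exact ⟨ht1, ht3⟩
          · rintro ⟨ht1, ht2⟩; exact ⟨ht2, ⟨ht1, ht2.trans hu.2⟩⟩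
        rw [h2, setIntegral_const, measureReal_def, hμ, N.measure_Ioc, hN0, sub_zero,
          ENNReal.toReal_ofReal (hN0 ▸ N.mono hu.1.le : (0:ℝ) ≤ N u)]
        rw [smul_eq_mul, mul_comm]


lemma step2 (N : StieltjesFunction ℝ) (hN0 : N 0 = 0) (k : ℝ) (hk : 0 < k) :
    ∫ u in Ioc 0 k, (2*(k-u)) * N u
      = ∫ s in Ioc 0 k, (∫ u in Ioc 0 s, 2 * N u) := by
  haveI : IsFiniteMeasure (volume.restrict (Ioc (0:ℝ) k)) :=
    ⟨by rw [Measure.restrict_apply_univ]; simp⟩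
  have hNnn : ∀ u : ℝ, 0 ≤ u → 0 ≤ N u := fun u hu => hN0 ▸ N.mono hu
  set f : ℝ → ℝ → ℝ := fun u s => indicator (Ici u) (fun _ => 2 * N u) s with hf
  have hint : Integrable (Function.uncurry f)
      ((volume.restrict (Ioc (0:ℝ) k)).prod (volume.restrict (Ioc (0:ℝ) k))) := by
    have hmeas : Measurable (Function.uncurry f) := by
      have hset : MeasurableSet {p : ℝ × ℝ | p.1 ≤ p.2} :=
        measurableSet_le measurable_fst measurable_snd
      have : Function.uncurry f = indicator {p : ℝ × ℝ | p.1 ≤ p.2} (fun p => 2 * N p.1) := by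
        funext p
        simp only [Function.uncurry, hf, indicator, mem_Ici, mem_setOf_eq]
      rw [this]
      exact (measurable_const.mul (N.mono.measurable.comp measurable_fst)).indicator hset
    apply Integrable.mono' (g := fun _ => 2 * N k) (integrable_const _)
      hmeas.aestronglyMeasurable
    rw [Measure.prod_restrict]
    filter_upwards [ae_restrict_mem (measurableSet_Ioc.prod measurableSet_Ioc)] with p hp
    obtain ⟨hp1, hp2⟩ := hp
    simp only [Function.uncurry, hf, indicator, mem_Ici]
    have hp1nn : (0:ℝ) ≤ N p.1 := hNnn p.1 hp1.1.le
    have hmono : N p.1 ≤ N k := N.mono hp1.2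
    split_ifs with hcase
    · rw [Real.norm_eq_abs, abs_of_nonneg (by linarith)]
      linarith
    · rw [norm_zero]; linarith
  have swap := MeasureTheory.integral_integral_swap hint
  calc ∫ u in Ioc 0 k, (2*(k-u)) * N u
      = ∫ u in Ioc 0 k, (∫ s in Ioc 0 k, f u s) := by
        apply setIntegral_congr_fun measurableSet_Ioc
        intro u hu
        show (2*(k-u)) * N u = ∫ s in Ioc 0 k, f u s
        rw [hf]
        simp only
        rw [MeasureTheory.integral_indicator measurableSet_Ici,
          Measure.restrict_restrict measurableSet_Ici]
        have h1 : Ici u ∩ Ioc (0:ℝ) k = Icc u k := by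
          ext s; constructor
          · rintro ⟨hs1, ⟨_, hs2⟩⟩; exact ⟨hs1, hs2⟩
          · rintro ⟨hs1, hs2⟩; exact ⟨hs1, ⟨lt_of_lt_of_le hu.1 hs1, hs2⟩⟩
        rw [h1, setIntegral_const, measureReal_def, Real.volume_Icc,
          ENNReal.toReal_ofReal (by linarith [hu.2] : (0:ℝ) ≤ k - u), smul_eq_mul]
        ring
    _ = ∫ s in Ioc 0 k, (∫ u in Ioc 0 k, f u s) := swap
    _ = ∫ s in Ioc 0 k, (∫ u in Ioc 0 s, 2 * N u) := by
        apply setIntegral_congr_fun measurableSet_Ioc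
        intro s hs
        show (∫ u in Ioc 0 k, f u s) = ∫ u in Ioc 0 s, 2 * N u
        have h1 : ∀ u, f u s = indicator (Iic s) (fun u => 2 * N u) u := by
          intro u
          simp only [hf, indicator, mem_Ici, mem_Iic]
        simp only [h1]
        rw [MeasureTheory.integral_indicator measurableSet_Iic,
          Measure.restrict_restrict measurableSet_Iic]
        have h2 : Iic s ∩ Ioc (0:ℝ) k = Ioc 0 s := by
          ext u; constructor
          · rintro ⟨hu3, ⟨hu1, _⟩⟩; exact ⟨hu1, hu3⟩
          · rintro ⟨hu1, hu2⟩; exact ⟨hu2, ⟨hu1, hu2.trans hs.2⟩⟩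
        rw [h2]


theorem riesz_mean_determines_counting_function (N₁ N₂ : StieltjesFunction ℝ)
    (h₁ : ∀ t : ℝ, t ≤ 0 → N₁ t = 0) (h₂ : ∀ t : ℝ, t ≤ 0 → N₂ t = 0)
    (h : ∀ k : ℝ, 0 < k →
      ∫ t in Set.Ioc (0 : ℝ) k, (k - t) ^ 2 ∂N₁.measure
        = ∫ t in Set.Ioc (0 : ℝ) k, (k - t) ^ 2 ∂N₂.measure) :
    ∀ t : ℝ, N₁ t = N₂ t := by
  have key : ∀ (N : StieltjesFunction ℝ), N 0 = 0 → ∀ k : ℝ, 0 < k →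
      ∫ t in Set.Ioc (0 : ℝ) k, (k - t) ^ 2 ∂N.measure
        = ∫ s in Set.Ioc (0:ℝ) k, (∫ u in Set.Ioc (0:ℝ) s, 2 * N u) :=
    fun N hN0 k hk => (step1 N hN0 k hk).trans (step2 N hN0 k hk)
  have hN01 : N₁ 0 = 0 := h₁ 0 le_rfl
  have hN02 : N₂ 0 = 0 := h₂ 0 le_rfl
  have hgint : ∀ (N : StieltjesFunction ℝ) (a b : ℝ),
      IntervalIntegrable (fun u => 2 * N u) volume a b :=
    fun N a b => (N.mono.intervalIntegrable).const_mul 2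
  set G₁ : ℝ → ℝ := fun s => ∫ u in (0:ℝ)..s, 2 * N₁ u with hG₁
  set G₂ : ℝ → ℝ := fun s => ∫ u in (0:ℝ)..s, 2 * N₂ u with hG₂
  have hGcont₁ : Continuous G₁ := intervalIntegral.continuous_primitive (hgint N₁) 0
  have hGcont₂ : Continuous G₂ := intervalIntegral.continuous_primitive (hgint N₂) 0
  -- primitives vanish on nonpositive reals
  have hGzero : ∀ (N : StieltjesFunction ℝ), (∀ t : ℝ, t ≤ 0 → N t = 0) →
      ∀ s : ℝ, s ≤ 0 → (∫ u in (0:ℝ)..s, 2 * N u) = 0 := by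
    intro N hN s hs
    rw [intervalIntegral.integral_symm, intervalIntegral.integral_of_le hs]
    rw [setIntegral_congr_fun measurableSet_Ioc
      (fun u hu => by rw [hN u hu.2]; ring : ∀ u ∈ Ioc s 0, 2 * N u = 0)]
    simp
  -- the primitives of the primitives agree
  have hΦ : (fun k => ∫ s in (0:ℝ)..k, (G₁ s - G₂ s)) = fun _ => (0:ℝ) := by
    funext k
    rcases le_or_gt k 0 with hk | hk
    · rw [intervalIntegral.integral_symm, intervalIntegral.integral_of_le hk]
      rw [setIntegral_congr_fun measurableSet_Ioc
        (fun s hs => by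
          rw [hG₁, hG₂]
          simp only
          rw [hGzero N₁ h₁ s hs.2, hGzero N₂ h₂ s hs.2, sub_zero]
            : ∀ s ∈ Ioc k 0, G₁ s - G₂ s = 0)]
      simp
    · have e : ∀ (N : StieltjesFunction ℝ), N 0 = 0 →
          (∫ s in (0:ℝ)..k, ∫ u in (0:ℝ)..s, 2 * N u)
            = ∫ t in Set.Ioc (0 : ℝ) k, (k - t) ^ 2 ∂N.measure := by
        intro N hN0
        rw [key N hN0 k hk, intervalIntegral.integral_of_le hk.le]
        apply setIntegral_congr_fun measurableSet_Ioc
        intro s hs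
        exact intervalIntegral.integral_of_le hs.1.le
      rw [intervalIntegral.integral_sub (hGcont₁.intervalIntegrable 0 k)
        (hGcont₂.intervalIntegrable 0 k)]
      rw [hG₁, hG₂]
      simp only
      rw [e N₁ hN01, e N₂ hN02, h k hk, sub_self]
  have hGeq : ∀ s, G₁ s = G₂ s := by
    intro s
    have hH : Continuous fun x => G₁ x - G₂ x := hGcont₁.sub hGcont₂
    have hd := Continuous.deriv_integral (fun x => G₁ x - G₂ x) hH 0 s
    rw [hΦ] at hd
    simp at hd
    linarith
  -- conclude via right derivatives
  intro t
  have hd : ∀ (N : StieltjesFunction ℝ),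
      derivWithin (fun s => ∫ u in (0:ℝ)..s, 2 * N u) (Ici t) t = 2 * N t := by
    intro N
    apply intervalIntegral.derivWithin_integral_right (hgint N 0 t)
      ⟨univ, Filter.univ_mem, ((measurable_const.mul N.mono.measurable).aestronglyMeasurable).restrict⟩
      (continuousWithinAt_const.mul ((N.right_continuous t).mono Ioi_subset_Ici_self))
  have e : (fun s => ∫ u in (0:ℝ)..s, 2 * N₁ u) = fun s => ∫ u in (0:ℝ)..s, 2 * N₂ u :=
    funext hGeq
  have d1 := hd N₁
  have d2 := hd N₂
  rw [e] at d1
  rw [d2] at d1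
  linarith
end

section
/- Let N : ℝ → ℝ be nondecreasing with N(t) = 0 for t ≤ 0, and suppose ∫₀ᵏ (k−t)² dN(t) = C·k^(d+2) + O(k^(d+1)) as k → ∞ for some constant C > 0 and integer d ≥ 2. Then N(k) ≤ C'·k^d for some constant C' and all sufficiently large k. -/
open MeasureTheory Filter Asymptotics

theorem tauberian_upper_bound (N : StieltjesFunction ℝ)
    (hN0 : ∀ t : ℝ, t ≤ 0 → N t = 0) (C : ℝ) (hC : 0 < C) (d : ℕ) (hd : 2 ≤ d)
    (h : (fun k : ℝ => (∫ t in Set.Ioc (0 : ℝ) k, (k - t) ^ 2 ∂N.measure)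
        - C * k ^ (d + 2)) =O[atTop] fun k : ℝ => k ^ (d + 1)) :
    ∃ C' : ℝ, ∀ᶠ k in atTop, N k ≤ C' * k ^ d := by
  obtain ⟨M, hM0, hM⟩ := h.exists_pos
  rw [isBigOWith_iff, eventually_atTop] at hM
  obtain ⟨k0, hk0⟩ := hM
  refine ⟨C * 2 ^ (d + 2) + M * 2 ^ (d + 1), ?_⟩
  filter_upwards [eventually_ge_atTop (max k0 1)] with k hk
  have hk1 : (1 : ℝ) ≤ k := le_trans (le_max_right _ _) hk
  have hkpos : (0:ℝ) < k := lt_of_lt_of_le one_pos hk1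
  have hkk0 : k0 ≤ 2 * k := by
    have := le_trans (le_max_left k0 1) hk; linarith
  have hNk : N k = (N.measure (Set.Ioc 0 k)).toReal := by
    rw [N.measure_Ioc, hN0 0 le_rfl, sub_zero, ENNReal.toReal_ofReal]
    have hmono := N.mono (le_of_lt hkpos)
    have h0 := hN0 0 le_rfl
    linarith
  have hint : IntegrableOn (fun t => (2 * k - t) ^ 2) (Set.Ioc 0 (2 * k)) N.measure :=
    Continuous.integrableOn_Ioc (by continuity)
  have hsub : Set.Ioc (0:ℝ) k ⊆ Set.Ioc 0 (2 * k) :=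
    Set.Ioc_subset_Ioc_right (by linarith)
  have hfin : N.measure (Set.Ioc (0:ℝ) k) < ⊤ := by
    rw [N.measure_Ioc]; exact ENNReal.ofReal_lt_top
  have step1 : k ^ 2 * N k ≤ ∫ t in Set.Ioc (0:ℝ) k, (2 * k - t) ^ 2 ∂N.measure := by
    have hconst : ∫ _t in Set.Ioc (0:ℝ) k, (k:ℝ) ^ 2 ∂N.measure
        = (N.measure (Set.Ioc 0 k)).toReal * k ^ 2 := by
      rw [setIntegral_const, smul_eq_mul, measureReal_def]
    have hmono : ∫ _t in Set.Ioc (0:ℝ) k, (k:ℝ) ^ 2 ∂N.measure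
        ≤ ∫ t in Set.Ioc (0:ℝ) k, (2 * k - t) ^ 2 ∂N.measure := by
      refine setIntegral_mono_on (integrableOn_const hfin.ne)
        (hint.mono_set hsub) measurableSet_Ioc ?_
      intro t ht
      have h1 : 0 < t := ht.1
      have h2 : t ≤ k := ht.2
      nlinarith
    rw [hNk]; linarith [hmono]
  have step2 : (∫ t in Set.Ioc (0:ℝ) k, (2 * k - t) ^ 2 ∂N.measure)
      ≤ ∫ t in Set.Ioc (0:ℝ) (2 * k), (2 * k - t) ^ 2 ∂N.measure := by
    refine setIntegral_mono_set hint ?_ (HasSubset.Subset.eventuallyLE hsub)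
    filter_upwards with t
    positivity
  have hbd := hk0 (2 * k) hkk0
  rw [Real.norm_eq_abs, Real.norm_eq_abs] at hbd
  have habs : |(2 * k) ^ (d + 1)| = (2 * k) ^ (d + 1) := by
    rw [abs_of_nonneg]; positivity
  rw [habs] at hbd
  have step3 : (∫ t in Set.Ioc (0:ℝ) (2 * k), (2 * k - t) ^ 2 ∂N.measure)
      ≤ C * (2 * k) ^ (d + 2) + M * (2 * k) ^ (d + 1) := by
    have := abs_le.mp hbd
    linarith [this.2]
  have key : k ^ 2 * N k ≤ C * (2 * k) ^ (d + 2) + M * (2 * k) ^ (d + 1) :=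
    le_trans step1 (le_trans step2 step3)
  have hpow : k ^ (d + 1) ≤ k ^ (d + 2) := pow_le_pow_right₀ hk1 (by omega)
  have expand : C * (2 * k) ^ (d + 2) + M * (2 * k) ^ (d + 1)
      ≤ (C * 2 ^ (d + 2) + M * 2 ^ (d + 1)) * k ^ (d + 2) := by
    rw [mul_pow, mul_pow]
    have h2 : (0:ℝ) ≤ M * 2 ^ (d + 1) := by positivity
    nlinarith [mul_le_mul_of_nonneg_left hpow h2]
  have key2 : k ^ 2 * N k ≤ (C * 2 ^ (d + 2) + M * 2 ^ (d + 1)) * k ^ d * k ^ 2 := by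
    have : k ^ (d + 2) = k ^ d * k ^ 2 := by ring
    calc k ^ 2 * N k ≤ (C * 2 ^ (d + 2) + M * 2 ^ (d + 1)) * k ^ (d + 2) :=
          le_trans key expand
      _ = (C * 2 ^ (d + 2) + M * 2 ^ (d + 1)) * k ^ d * k ^ 2 := by rw [this]; ring
  have hk2 : (0:ℝ) < k ^ 2 := by positivity
  nlinarith [key2]
end
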